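/- Let Δ₁ and Δ₂ be two open regions in ℝ² whose closures share a boundary piece lying in the zero set of an irreducible polynomial ℓ(x,y) of degree 1 (a line), and let p₁, p₂ be polynomials. If p₁ − p₂ = ℓ^{r+1}·q for some polynomial q, then the piecewise function equal to p₁ on Δ₁ and p₂ on Δ₂ extends to a C^r function on a neighborhood of any point of the common edge in the interior of the line segment. -/
import Mathlib


open MvPolynomial

/-- The truncated power `t ↦ (max t 0)^(n+2)` has derivative `(n+2) * (max t 0)^(n+1)`
everywhere. -/
lemma hasDerivAt_max_zero_pow (n : ℕ) (t : ℝ) :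
    HasDerivAt (fun s : ℝ => max s 0 ^ (n + 2)) ((n + 2) * max t 0 ^ (n + 1)) t := by
  rcases lt_trichotomy t 0 with ht | ht | ht
  · have h0 : max t 0 = 0 := max_eq_right ht.le
    rw [h0, zero_pow (Nat.succ_ne_zero n), mul_zero]
    refine (hasDerivAt_const t (0:ℝ)).congr_of_eventuallyEq ?_
    filter_upwards [Iio_mem_nhds ht] with s hs
    rw [max_eq_right (le_of_lt hs), zero_pow (by omega)]
  · subst ht
    simp only [max_self, zero_pow (by omega : n + 1 ≠ 0), mul_zero]
    rw [hasDerivAt_iff_isLittleO]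
    simp only [sub_zero, smul_zero, max_self, zero_pow (by omega : n + 2 ≠ 0)]
    have h1 : (fun s : ℝ => max s 0 ^ (n + 2))
        =O[nhds 0] fun s : ℝ => s ^ (n + 2) := by
      apply Asymptotics.IsBigO.of_bound 1
      filter_upwards with s
      have hb : |max s 0| ≤ |s| := by
        rw [abs_of_nonneg (le_max_right s 0)]
        exact max_le (le_abs_self s) (abs_nonneg s)
      simp only [one_mul, norm_pow, Real.norm_eq_abs]
      exact pow_le_pow_left₀ (abs_nonneg _) hb _
    exact h1.trans_isLittleO (Asymptotics.isLittleO_pow_id (by omega))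
  · have h0 : max t 0 = t := max_eq_left ht.le
    rw [h0]
    have h2 : HasDerivAt (fun s : ℝ => s ^ (n + 2)) (↑(n + 2) * t ^ (n + 2 - 1)) t :=
      hasDerivAt_pow (n + 2) t
    have h3 : ((n + 2 : ℕ) : ℝ) * t ^ (n + 2 - 1) = (n + 2) * t ^ (n + 1) := by
      push_cast; ring_nf
    rw [← h3]
    refine h2.congr_of_eventuallyEq ?_
    filter_upwards [Ioi_mem_nhds ht] with s hs
    rw [max_eq_left (le_of_lt hs)]

/-- The truncated power `t ↦ (max t 0)^(n+1)` is `C^n`. -/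
lemma contDiff_max_zero_pow (n : ℕ) :
    ContDiff ℝ (n : ℕ∞) (fun t : ℝ => max t 0 ^ (n + 1)) := by
  induction n with
  | zero =>
    exact contDiff_zero.2 ((continuous_id.max continuous_const).pow 1)
  | succ n ih =>
    have hcast : (((n + 1 : ℕ) : ℕ∞) : WithTop ℕ∞) = (n : ℕ∞) + 1 := by push_cast; rfl
    rw [hcast, contDiff_succ_iff_deriv]
    refine ⟨fun t => (hasDerivAt_max_zero_pow n t).differentiableAt, by simp, ?_⟩
    have hde : deriv (fun s : ℝ => max s 0 ^ (n + 1 + 1)) =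
        fun t => ((n : ℝ) + 2) * max t 0 ^ (n + 1) := by
      funext t; exact (hasDerivAt_max_zero_pow n t).deriv
    rw [hde]
    exact contDiff_const.mul ih

/-- Evaluation of a bivariate polynomial is smooth. -/
lemma contDiff_eval_poly (p : MvPolynomial (Fin 2) ℝ) (n : ℕ∞) :
    ContDiff ℝ n (fun x : ℝ × ℝ => eval ![x.1, x.2] p) := by
  induction p using MvPolynomial.induction_on with
  | C a => simpa using contDiff_const (c := a)
  | add p q hp hq => simpa using hp.add hq
  | mul_X p i hp =>
    simp only [map_mul, eval_X]
    refine hp.mul ?_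
    fin_cases i
    · simpa using contDiff_fst
    · simpa using contDiff_snd

/-- 'if' direction of the smooth cofactor criterion: if two polynomial
pieces differ by `ℓ^(r+1) q` across the line `ℓ = αx + βy + γ = 0`, then the piecewise
function is `C^r` (in particular near every point of the common edge). -/
theorem spline_smooth_cofactor_if (α β γ : ℝ) (hαβ : (α, β) ≠ (0, 0)) (r : ℕ)
    (p₁ p₂ q : MvPolynomial (Fin 2) ℝ)
    (hℓ : p₁ - p₂ = (C α * X 0 + C β * X 1 + C γ) ^ (r + 1) * q) :
    ContDiff ℝ (r : ℕ∞)
      (fun x : ℝ × ℝ =>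
        if 0 ≤ α * x.1 + β * x.2 + γ then eval ![x.1, x.2] p₁ else eval ![x.1, x.2] p₂) := by
  have key : ∀ x : ℝ × ℝ,
      (if 0 ≤ α * x.1 + β * x.2 + γ then eval ![x.1, x.2] p₁ else eval ![x.1, x.2] p₂) =
      eval ![x.1, x.2] p₂ +
        max (α * x.1 + β * x.2 + γ) 0 ^ (r + 1) * eval ![x.1, x.2] q := by
    intro x
    have he : eval ![x.1, x.2] p₁ - eval ![x.1, x.2] p₂ =
        (α * x.1 + β * x.2 + γ) ^ (r + 1) * eval ![x.1, x.2] q := by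
      have := congrArg (eval ![x.1, x.2]) hℓ
      simpa [map_sub, map_mul, map_add, map_pow] using this
    by_cases h : 0 ≤ α * x.1 + β * x.2 + γ
    · rw [if_pos h, max_eq_left h]
      linarith [he]
    · rw [if_neg h, max_eq_right (le_of_not_ge h), zero_pow (Nat.succ_ne_zero r), zero_mul,
        add_zero]
  rw [funext key]
  refine (contDiff_eval_poly p₂ r).add (ContDiff.mul ?_ (contDiff_eval_poly q r))
  have hline : ContDiff ℝ (r : ℕ∞) (fun x : ℝ × ℝ => α * x.1 + β * x.2 + γ) :=
    ((contDiff_const.mul contDiff_fst).add (contDiff_const.mul contDiff_snd)).add contDiff_const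
  exact (contDiff_max_zero_pow r).comp hline
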